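/- Let κ, τ : (0,∞) → ℝ be defined by κ(s) = √5/s and τ(s) = 3√7/(2s). Then for every s > 0 one has κ⁽⁴⁾(s) − 15κ(s)(κ'(s))² − 10κ²(s)κ''(s) + κ⁵(s) − τ²(s)(κ''(s) − 2κ³(s)) = 0. -/

import Mathlib

/-- The functions `κ(s) = √5/s` and `τ(s) = 3√7/(2s)` satisfy the normal component of
the triharmonic equation `κ⁽⁴⁾ − 15κ(κ')² − 10κ²κ'' + κ⁵ − τ²(κ'' − 2κ³) = 0` on `(0,∞)`. -/
theorem stmt_3 (κ τ : ℝ → ℝ)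
    (hκ : κ = fun s => Real.sqrt 5 / s)
    (hτ : τ = fun s => 3 * Real.sqrt 7 / (2 * s)) :
    ∀ s : ℝ, 0 < s →
      iteratedDeriv 4 κ s - 15 * κ s * (deriv κ s) ^ 2
        - 10 * (κ s) ^ 2 * iteratedDeriv 2 κ s + (κ s) ^ 5
        - (τ s) ^ 2 * (iteratedDeriv 2 κ s - 2 * (κ s) ^ 3) = 0 := by
  intro s hs
  have hs0 : s ≠ 0 := ne_of_gt hs
  have hκ' : κ = fun x => Real.sqrt 5 * x⁻¹ := by
    funext x; simp [hκ, div_eq_mul_inv]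
  have hit : ∀ k : ℕ, deriv^[k] κ = fun x => Real.sqrt 5 * deriv^[k] Inv.inv x := by
    intro k
    induction k with
    | zero => simpa using hκ'
    | succ k ih =>
      rw [Function.iterate_succ_apply', Function.iterate_succ_apply', ih,
        deriv_const_mul_field']
  have hval : ∀ k : ℕ, iteratedDeriv k κ s =
      Real.sqrt 5 * ((∏ i ∈ Finset.range k, (-1 - (i : ℝ))) * s ^ (-1 - (k : ℤ))) := by
    intro k
    rw [iteratedDeriv_eq_iterate, hit]
    simp only [iter_deriv_inv]
    congr 2
    induction k with
    | zero => simp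
    | succ k ih =>
      rw [Finset.prod_range_succ, ← ih, pow_succ, Nat.factorial_succ]
      push_cast
      ring
  have hd1 : deriv κ s = Real.sqrt 5 * (-1 * s ^ (-2 : ℤ)) := by
    have := hval 1
    rw [iteratedDeriv_one] at this
    simpa using this
  have hd2 : iteratedDeriv 2 κ s = Real.sqrt 5 * (2 * s ^ (-3 : ℤ)) := by
    have := hval 2
    rw [this]
    norm_num [Finset.prod_range_succ]
  have hd4 : iteratedDeriv 4 κ s = Real.sqrt 5 * (24 * s ^ (-5 : ℤ)) := by
    have := hval 4
    rw [this]
    norm_num [Finset.prod_range_succ]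
  have h5 : Real.sqrt 5 ^ 2 = 5 := Real.sq_sqrt (by norm_num)
  have h7 : Real.sqrt 7 ^ 2 = 7 := Real.sq_sqrt (by norm_num)
  rw [hd1, hd2, hd4, hκ, hτ]
  simp only [zpow_neg, zpow_ofNat]
  field_simp
  ring_nf
  have h53 : Real.sqrt 5 ^ 3 = 5 * Real.sqrt 5 := by rw [pow_succ, h5]
  have h55 : Real.sqrt 5 ^ 5 = 25 * Real.sqrt 5 := by
    have : Real.sqrt 5 ^ 5 = (Real.sqrt 5 ^ 2) ^ 2 * Real.sqrt 5 := by ring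
    rw [this, h5]; ring
  rw [h53, h55, h7]
  ring
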